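/- arXiv:1602.04059 — 3 statements merged into one kernel-verified Lean document; each statement's English description precedes it below -/
import Mathlib

section
/- Let G be a graph that is not a matching, let H be a nonempty graph, and fix a subgraph G_− ⊆ G with e(G_−) = e(G) − 1 and v(G_−) = v(G). Let a graph G_−^H ∈ F(G_−,H) with central copy G′_− be given, and let g be a vertex pair that completes G′_− to a copy of G when inserted as an edge. Then every subgraph J ⊆ G_−^H that contains both vertices of g satisfies v(J) − e(J)/m_2(G,H) ≥ 2 − L(G_−^H). -/
open scoped Classical

namespace AsymRamsey

/-- The 2-density `d₂` of a graph with `v` vertices and `e` edges. -/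
noncomputable def d2 (v e : ℕ) : ℝ :=
  if e = 0 then 0 else if 3 ≤ v then ((e : ℝ) - 1) / ((v : ℝ) - 2) else 1 / 2

/-- `m₂(H)`: the maximum of `d₂` over all subgraphs of `H`. -/
noncomputable def m2 {V : Type*} [Fintype V] (H : SimpleGraph V) : ℝ :=
  sSup {x : ℝ | ∃ J : H.Subgraph, x = d2 J.verts.ncard J.edgeSet.ncard}

/-- The asymmetric 2-density `d₂(G, ·)` applied to a graph with `v` vertices and `e` edges. -/
noncomputable def d2a {V : Type*} [Fintype V] (G : SimpleGraph V) (v e : ℕ) : ℝ :=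
  if G.edgeSet.ncard = 0 ∨ e = 0 then 0 else (e : ℝ) / ((v : ℝ) - 2 + 1 / m2 G)

/-- `m₂(G,H)`: the maximum of `d₂(G,·)` over all subgraphs of `H`. -/
noncomputable def m2a {V W : Type*} [Fintype V] [Fintype W]
    (G : SimpleGraph V) (H : SimpleGraph W) : ℝ :=
  sSup {x : ℝ | ∃ J : H.Subgraph, x = d2a G J.verts.ncard J.edgeSet.ncard}

/-- `H` is balanced with respect to `d₂(G,·)`. -/
def BalancedW {V W : Type*} [Fintype V] [Fintype W]
    (G : SimpleGraph V) (H : SimpleGraph W) : Prop :=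
  m2a G H = d2a G (Fintype.card W) H.edgeSet.ncard

/-- `H` is strictly balanced with respect to `d₂(G,·)`. -/
def StrictlyBalancedW {V W : Type*} [Fintype V] [Fintype W]
    (G : SimpleGraph V) (H : SimpleGraph W) : Prop :=
  BalancedW G H ∧
    ∀ J : H.Subgraph, J ≠ ⊤ → d2a G J.verts.ncard J.edgeSet.ncard < m2a G H

/-- `m*(H) = min {(e_H - e_J)/(v_H - v_J) : J ⊆ H, 2 ≤ v_J < v_H}`. -/
noncomputable def mStar {W : Type*} [Fintype W] (H : SimpleGraph W) : ℝ :=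
  sInf {x : ℝ | ∃ J : H.Subgraph, 2 ≤ J.verts.ncard ∧ J.verts.ncard < Fintype.card W ∧
    x = ((H.edgeSet.ncard : ℝ) - (J.edgeSet.ncard : ℝ)) /
        ((Fintype.card W : ℝ) - (J.verts.ncard : ℝ))}

/-- `x*(H) = m*(H) / (e_H - m*(H)(v_H - 2))`. -/
noncomputable def xStar {W : Type*} [Fintype W] (H : SimpleGraph W) : ℝ :=
  mStar H / ((H.edgeSet.ncard : ℝ) - mStar H * ((Fintype.card W : ℝ) - 2))

/-- A graph is a matching if it has maximum degree at most 1. -/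
def IsMatchingGraph {V : Type*} (G : SimpleGraph V) : Prop :=
  ∀ v : V, (G.neighborSet v).ncard ≤ 1

/-- `f` is (the embedding of) a copy of `H` in `F`. -/
def IsCopy {W V : Type*} (H : SimpleGraph W) (F : SimpleGraph V) (f : W ↪ V) : Prop :=
  ∀ ⦃u v : W⦄, H.Adj u v → F.Adj (f u) (f v)

/-- The edges of the copy of `H` given by the embedding `f`. -/
def copyEdges {W V : Type*} (H : SimpleGraph W) (f : W ↪ V) : Set (Sym2 V) :=
  Sym2.map (⇑f) '' H.edgeSet

/-- `E_H(F)`: the union of the edge sets of all copies of `H` in `F` (the `H`-edges of `F`). -/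
def HEdges {W V : Type*} (H : SimpleGraph W) (F : SimpleGraph V) : Set (Sym2 V) :=
  ⋃ f ∈ {f : W ↪ V | IsCopy H F f}, copyEdges H f

/-- `F → (G,H)`: every red-blue (true/false) coloring of the edges of `F` yields a
red copy of `G` or a blue copy of `H`. -/
def Arrows {α β γ : Type*} (F : SimpleGraph α) (G : SimpleGraph β) (H : SimpleGraph γ) : Prop :=
  ∀ c : Sym2 α → Bool,
    (∃ f : β ↪ α, IsCopy G F f ∧ ∀ e ∈ G.edgeSet, c (Sym2.map (⇑f) e) = true) ∨
    (∃ f : γ ↪ α, IsCopy H F f ∧ ∀ e ∈ H.edgeSet, c (Sym2.map (⇑f) e) = false)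

/-- `F` is Ramsey-critical for the pair `(G,H)`. -/
def Critical {α β γ : Type*} (F : SimpleGraph α) (G : SimpleGraph β) (H : SimpleGraph γ) : Prop :=
  Arrows F G H ∧ ∀ F' : F.Subgraph, F' ≠ ⊤ → ¬ Arrows F'.coe G H

/-- The probability that the binomial random graph `G_{n,p}` satisfies property `A`. -/
noncomputable def gnpProb (n : ℕ) (p : ℝ) (A : SimpleGraph (Fin n) → Prop) : ℝ :=
  ∑ S ∈ (Finset.univ.filter fun e : Sym2 (Fin n) => ¬ e.IsDiag).powerset,
    if A (SimpleGraph.fromEdgeSet (↑S)) then p ^ S.card * (1 - p) ^ (n.choose 2 - S.card) else 0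

/-- The edges of `F` induced on a vertex set `V`. -/
def EdgesIn {n : ℕ} (F : SimpleGraph (Fin n)) (V : Finset (Fin n)) : Set (Sym2 (Fin n)) :=
  {e ∈ F.edgeSet | ∀ v ∈ e, v ∈ V}

/-- `F` is `(ρ,d)`-dense. -/
def RhoDDense (n : ℕ) (ρ d : ℝ) (F : SimpleGraph (Fin n)) : Prop :=
  ∀ V : Finset (Fin n), ρ * (n : ℝ) ≤ (V.card : ℝ) →
    d * (n.choose 2 : ℝ) ≤ ((EdgesIn F V).ncard : ℝ)

/-- The general density measure `d_{a,b}`. -/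
noncomputable def dab (a b : ℝ) (v e : ℕ) : ℝ :=
  if e = 0 then 0 else ((e : ℝ) - a) / ((v : ℝ) - b)

/-- `m_{a,b}(H)`: the maximum of `d_{a,b}` over all subgraphs of `H`. -/
noncomputable def mab {W : Type*} [Fintype W] (a b : ℝ) (H : SimpleGraph W) : ℝ :=
  sSup {x : ℝ | ∃ J : H.Subgraph, x = dab a b J.verts.ncard J.edgeSet.ncard}

/-- `H` is balanced with respect to `d_{a,b}`. -/
def BalancedAB {W : Type*} [Fintype W] (a b : ℝ) (H : SimpleGraph W) : Prop :=
  mab a b H = dab a b (Fintype.card W) H.edgeSet.ncard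

/-- `H` is strictly balanced with respect to `d_{a,b}`. -/
def StrictlyBalancedAB {W : Type*} [Fintype W] (a b : ℝ) (H : SimpleGraph W) : Prop :=
  BalancedAB a b H ∧
    ∀ J : H.Subgraph, J ≠ ⊤ → dab a b J.verts.ncard J.edgeSet.ncard < mab a b H

private lemma biUnion_mono' {ι α : Type*} [DecidableEq α] (s : Finset ι)
    (A B : ι → Finset α) (hAB : ∀ i, A i ⊆ B i) : s.biUnion A ⊆ s.biUnion B :=
  Finset.biUnion_subset.2 fun i hi => (hAB i).trans (Finset.subset_biUnion_of_mem B hi)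

private lemma deficit_mono_same {ι α : Type*} [DecidableEq ι] [DecidableEq α]
    (s : Finset ι) (A B : ι → Finset α) (hAB : ∀ i, A i ⊆ B i) :
    (s.biUnion B).card + ∑ i ∈ s, (A i).card ≤ (s.biUnion A).card + ∑ i ∈ s, (B i).card := by
  induction s using Finset.induction_on with
  | empty => simp
  | @insert j s hj IH =>
    rw [Finset.biUnion_insert, Finset.biUnion_insert, Finset.sum_insert hj, Finset.sum_insert hj]
    have e1 := Finset.card_union_add_card_inter (B j) (s.biUnion B)
    have e2 := Finset.card_union_add_card_inter (A j) (s.biUnion A)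
    have h3 : (A j ∩ s.biUnion A).card ≤ (B j ∩ s.biUnion B).card :=
      Finset.card_le_card (Finset.inter_subset_inter (hAB j) (biUnion_mono' s A B hAB))
    omega

private lemma deficit_mono {ι α : Type*} [DecidableEq ι] [DecidableEq α]
    {s t : Finset ι} (hst : s ⊆ t) (A B : ι → Finset α) (hAB : ∀ i, A i ⊆ B i) :
    (t.biUnion B).card + ∑ i ∈ s, (A i).card ≤ (s.biUnion A).card + ∑ i ∈ t, (B i).card := by
  have h1 : (t.biUnion B).card ≤ (s.biUnion B ∪ (t \ s).biUnion B).card := by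
    apply Finset.card_le_card
    intro v hv
    rw [Finset.mem_biUnion] at hv
    obtain ⟨i, hit, hiv⟩ := hv
    rw [Finset.mem_union, Finset.mem_biUnion, Finset.mem_biUnion]
    by_cases his : i ∈ s
    · exact Or.inl ⟨i, his, hiv⟩
    · exact Or.inr ⟨i, Finset.mem_sdiff.2 ⟨hit, his⟩, hiv⟩
  have h1' : (s.biUnion B ∪ (t \ s).biUnion B).card ≤ (s.biUnion B).card + ((t \ s).biUnion B).card :=
    Finset.card_union_le _ _
  have h2 : ((t \ s).biUnion B).card ≤ ∑ i ∈ t \ s, (B i).card := Finset.card_biUnion_le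
  have h3 := deficit_mono_same s A B hAB
  have h4 : (∑ i ∈ t \ s, (B i).card) + ∑ i ∈ s, (B i).card = ∑ i ∈ t, (B i).card :=
    Finset.sum_sdiff hst
  omega

private lemma counting {ι α : Type*} [Fintype ι] [Fintype α] [DecidableEq ι] [DecidableEq α]
    (C : Finset α) (W U ends : ι → Finset α) (cx cy : α) (S : Finset ι) (vH : ℕ)
    (hcx : cx ∈ C) (hcy : cy ∈ C)
    (hU : ∀ e, U e ⊆ W e)
    (hends : ∀ e, ends e ⊆ W e ∩ C)
    (hends2 : ∀ e, (ends e).card = 2)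
    (hW : ∀ e, (W e).card = vH)
    (hcover : ∀ v : α, v ∈ C ∨ ∃ e, v ∈ W e) :
    ∑ e ∈ S, (U e).card + ({cx, cy} ∪ S.biUnion ends).card + Fintype.card α
        + 2 * Fintype.card ι
      ≤ ({cx, cy} ∪ S.biUnion U).card + 2 * S.card + C.card + Fintype.card ι * vH := by
  set A : Finset α := {cx, cy} ∪ S.biUnion U with hA
  set P : Finset α := {cx, cy} ∪ S.biUnion ends with hP
  set WW : Finset α := Finset.univ.biUnion (fun e => W e \ C) with hWW
  -- cover: card α = |C| + |WW|
  have hcov : Fintype.card α = C.card + WW.card := by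
    have hu : (Finset.univ : Finset α) = C ∪ WW := by
      apply Finset.Subset.antisymm
      · intro v _
        rcases hcover v with h | ⟨e, he⟩
        · exact Finset.mem_union_left _ h
        · by_cases hvC : v ∈ C
          · exact Finset.mem_union_left _ hvC
          · exact Finset.mem_union_right _ (Finset.mem_biUnion.2
              ⟨e, Finset.mem_univ e, Finset.mem_sdiff.2 ⟨he, hvC⟩⟩)
      · exact Finset.subset_univ _
    have hdisj : Disjoint C WW := by
      rw [Finset.disjoint_right]
      intro v hv
      rw [hWW, Finset.mem_biUnion] at hv
      obtain ⟨e, _, hv⟩ := hv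
      exact (Finset.mem_sdiff.1 hv).2
    rw [← Finset.card_univ, hu, Finset.card_union_of_disjoint hdisj]
  -- OUT part
  have hOUT : WW.card + ∑ e ∈ S, (U e \ C).card
      ≤ (S.biUnion fun e => U e \ C).card + ∑ e : ι, (W e \ C).card := by
    simpa using deficit_mono (Finset.subset_univ S) (fun e => U e \ C) (fun e => W e \ C)
      (fun e => Finset.sdiff_subset_sdiff (hU e) (by rfl))
  -- A split
  have hAsplit : (A ∩ C).card + (A \ C).card = A.card := Finset.card_inter_add_card_sdiff A C
  have hAsdiff : A \ C = S.biUnion fun e => U e \ C := by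
    ext v
    simp only [hA, Finset.mem_sdiff, Finset.mem_union, Finset.mem_biUnion, Finset.mem_insert,
      Finset.mem_singleton]
    constructor
    · rintro ⟨h | ⟨e, heS, heU⟩, hvC⟩
      · rcases h with rfl | rfl
        · exact absurd hcx hvC
        · exact absurd hcy hvC
      · exact ⟨e, heS, heU, hvC⟩
    · rintro ⟨e, heS, h1, h2⟩
      exact ⟨Or.inr ⟨e, heS, h1⟩, h2⟩
  -- IN part
  have h3 : ∀ e, 2 ≤ (W e ∩ C).card := by
    intro e
    calc 2 = (ends e).card := (hends2 e).symm
    _ ≤ _ := Finset.card_le_card (hends e)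
  have h1 : ∀ e ∈ S, (U e ∩ C).card + 2 ≤ (U e ∩ ends e).card + (W e ∩ C).card := by
    intro e _
    have hsub : U e ∩ C ⊆ (U e ∩ ends e) ∪ ((W e ∩ C) \ ends e) := by
      intro v hv
      rcases Finset.mem_inter.1 hv with ⟨hvU, hvC⟩
      by_cases hve : v ∈ ends e
      · exact Finset.mem_union_left _ (Finset.mem_inter.2 ⟨hvU, hve⟩)
      · exact Finset.mem_union_right _ (Finset.mem_sdiff.2
          ⟨Finset.mem_inter.2 ⟨hU e hvU, hvC⟩, hve⟩)
    have := (Finset.card_le_card hsub).trans (Finset.card_union_le _ _)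
    have hsd : ((W e ∩ C) \ ends e).card = (W e ∩ C).card - (ends e).card :=
      Finset.card_sdiff_of_subset (hends e)
    have := h3 e
    have := hends2 e
    omega
  have h2 : P.card + ∑ e ∈ S, (U e ∩ ends e).card ≤ (A ∩ C).card + 2 * S.card := by
    have hPsub : P ⊆ (A ∩ C) ∪ S.biUnion fun e => ends e \ A := by
      intro v hv
      rw [hP, Finset.mem_union] at hv
      rcases hv with hv | hv
      · apply Finset.mem_union_left
        apply Finset.mem_inter.2
        refine ⟨Finset.mem_union_left _ hv, ?_⟩
        rcases Finset.mem_insert.1 hv with rfl | hv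
        · exact hcx
        · rw [Finset.mem_singleton] at hv; subst hv; exact hcy
      · rw [Finset.mem_biUnion] at hv
        obtain ⟨e, heS, hve⟩ := hv
        by_cases hvA : v ∈ A
        · exact Finset.mem_union_left _ (Finset.mem_inter.2
            ⟨hvA, (Finset.mem_inter.1 (hends e hve)).2⟩)
        · exact Finset.mem_union_right _ (Finset.mem_biUnion.2
            ⟨e, heS, Finset.mem_sdiff.2 ⟨hve, hvA⟩⟩)
    have hP1 : P.card ≤ (A ∩ C).card + ∑ e ∈ S, (ends e \ A).card :=
      (Finset.card_le_card hPsub).trans ((Finset.card_union_le _ _).trans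
        (by gcongr; exact Finset.card_biUnion_le))
    have hper : ∀ e ∈ S, (ends e \ A).card + (U e ∩ ends e).card ≤ 2 := by
      intro e heS
      have hUA : U e ⊆ A := fun v hv =>
        Finset.mem_union_right _ (Finset.mem_biUnion.2 ⟨e, heS, hv⟩)
      have h5 : (U e ∩ ends e).card ≤ (ends e ∩ A).card := by
        apply Finset.card_le_card
        intro v hv
        rcases Finset.mem_inter.1 hv with ⟨h6, h7⟩
        exact Finset.mem_inter.2 ⟨h7, hUA h6⟩
      have h8 : (ends e ∩ A).card + (ends e \ A).card = (ends e).card :=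
        Finset.card_inter_add_card_sdiff _ _
      have := hends2 e
      omega
    have hsum : ∑ e ∈ S, ((ends e \ A).card + (U e ∩ ends e).card) ≤ ∑ e ∈ S, 2 :=
      Finset.sum_le_sum hper
    rw [Finset.sum_add_distrib, Finset.sum_const, smul_eq_mul, mul_comm] at hsum
    omega
  -- sums over univ split
  have hsplitWC : (∑ e ∈ Finset.univ \ S, (W e ∩ C).card) + ∑ e ∈ S, (W e ∩ C).card
      = ∑ e : ι, (W e ∩ C).card := Finset.sum_sdiff (Finset.subset_univ S)
  have hIN : (∑ e ∈ S, (U e ∩ C).card) + P.card + 2 * Fintype.card ι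
      ≤ (A ∩ C).card + 2 * S.card + ∑ e : ι, (W e ∩ C).card := by
    have hs1 : ∑ e ∈ S, ((U e ∩ C).card + 2) ≤ ∑ e ∈ S, ((U e ∩ ends e).card + (W e ∩ C).card) :=
      Finset.sum_le_sum h1
    rw [Finset.sum_add_distrib, Finset.sum_add_distrib, Finset.sum_const, smul_eq_mul,
      mul_comm] at hs1
    have hs2 : ∑ e ∈ Finset.univ \ S, 2 ≤ ∑ e ∈ Finset.univ \ S, (W e ∩ C).card :=
      Finset.sum_le_sum fun e _ => h3 e
    rw [Finset.sum_const, smul_eq_mul, mul_comm] at hs2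
    have hcards : S.card + (Finset.univ \ S).card = Fintype.card ι := by
      have := Finset.card_sdiff_add_card_eq_card (Finset.subset_univ S)
      rw [Finset.card_univ] at this
      omega
    omega
  -- vH split
  have hvHsplit : (∑ e : ι, (W e ∩ C).card) + (∑ e : ι, (W e \ C).card)
      = Fintype.card ι * vH := by
    rw [← Finset.sum_add_distrib]
    have : ∀ e : ι, (W e ∩ C).card + (W e \ C).card = vH := fun e => by
      rw [Finset.card_inter_add_card_sdiff, hW e]
    rw [Finset.sum_congr rfl fun e _ => this e, Finset.sum_const, smul_eq_mul,
      Finset.card_univ]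
  -- n split
  have hnsplit : ∑ e ∈ S, (U e).card
      = (∑ e ∈ S, (U e ∩ C).card) + ∑ e ∈ S, (U e \ C).card := by
    rw [← Finset.sum_add_distrib]
    exact Finset.sum_congr rfl fun e _ => (Finset.card_inter_add_card_sdiff _ _).symm
  rw [← hAsdiff] at hOUT
  set Z := Fintype.card ι * vH with hZ
  omega


private lemma two_le_verts {W : Type*} [Fintype W] {H : SimpleGraph W} (J : H.Subgraph)
    (h : J.edgeSet.Nonempty) : 2 ≤ J.verts.ncard := by
  obtain ⟨z, hz⟩ := h
  revert hz
  induction z using Sym2.inductionOn with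
  | hf a b =>
    intro hz
    rw [SimpleGraph.Subgraph.mem_edgeSet] at hz
    have hab : a ≠ b := (J.adj_sub hz).ne
    have hsub : ({a, b} : Set W) ⊆ J.verts := by
      rintro v (rfl | rfl)
      · exact J.edge_vert hz
      · exact J.edge_vert hz.symm
    calc 2 = ({a, b} : Set W).ncard := (Set.ncard_pair hab).symm
    _ ≤ _ := Set.ncard_le_ncard hsub (Set.toFinite _)

private lemma ncard_edge_le {W : Type*} [Fintype W] {H : SimpleGraph W} (J : H.Subgraph) :
    (J.edgeSet.ncard : ℝ) ≤ (Fintype.card (Sym2 W) : ℝ) := by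
  have h := Set.ncard_le_ncard (Set.subset_univ J.edgeSet) (Set.toFinite _)
  rw [Set.ncard_univ, Nat.card_eq_fintype_card] at h
  exact_mod_cast h

private lemma bddAbove_d2set {V : Type*} [Fintype V] (G : SimpleGraph V) :
    BddAbove {x : ℝ | ∃ J : G.Subgraph, x = d2 J.verts.ncard J.edgeSet.ncard} := by
  refine ⟨(Fintype.card (Sym2 V) : ℝ) + 1, ?_⟩
  rintro x ⟨J, rfl⟩
  have hle := ncard_edge_le J
  have hN : (0:ℝ) ≤ (Fintype.card (Sym2 V) : ℝ) := Nat.cast_nonneg _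
  unfold d2
  split_ifs with h1 h2
  · linarith
  · have he : 1 ≤ J.edgeSet.ncard := Nat.one_le_iff_ne_zero.2 h1
    have he' : (1:ℝ) ≤ (J.edgeSet.ncard : ℝ) := by exact_mod_cast he
    have hv' : (3:ℝ) ≤ (J.verts.ncard : ℝ) := by exact_mod_cast h2
    have : ((J.edgeSet.ncard : ℝ) - 1) / ((J.verts.ncard : ℝ) - 2)
        ≤ (J.edgeSet.ncard : ℝ) - 1 := by
      apply div_le_self <;> linarith
    linarith
  · linarith

private lemma half_le_m2 {V : Type*} [Fintype V] {G : SimpleGraph V} {x y : V}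
    (h : G.Adj x y) : (1/2 : ℝ) ≤ m2 G := by
  apply le_csSup (bddAbove_d2set G)
  refine ⟨G.subgraphOfAdj h, ?_⟩
  have hv : (G.subgraphOfAdj h).verts.ncard = 2 := Set.ncard_pair h.ne
  have he : (G.subgraphOfAdj h).edgeSet.ncard = 1 := by
    rw [SimpleGraph.edgeSet_subgraphOfAdj]; exact Set.ncard_singleton _
  rw [hv, he]; norm_num [d2]

private lemma m2_pos {V : Type*} [Fintype V] {G : SimpleGraph V} {x y : V}
    (h : G.Adj x y) : 0 < m2 G := lt_of_lt_of_le (by norm_num) (half_le_m2 h)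

private lemma bddAbove_d2aset {V W : Type*} [Fintype V] [Fintype W] (G : SimpleGraph V)
    (H : SimpleGraph W) (hm : 0 < m2 G) :
    BddAbove {x : ℝ | ∃ J : H.Subgraph, x = d2a G J.verts.ncard J.edgeSet.ncard} := by
  refine ⟨(Fintype.card (Sym2 W) : ℝ) * m2 G + 1, ?_⟩
  rintro x ⟨J, rfl⟩
  have hle := ncard_edge_le J
  have hN : (0:ℝ) ≤ (Fintype.card (Sym2 W) : ℝ) := Nat.cast_nonneg _
  unfold d2a
  split_ifs with h1
  · positivity
  · push_neg at h1
    have hv : 2 ≤ J.verts.ncard :=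
      two_le_verts J (Set.nonempty_of_ncard_ne_zero h1.2)
    have hv' : (2:ℝ) ≤ (J.verts.ncard : ℝ) := by exact_mod_cast hv
    have hm' : (0:ℝ) < 1 / m2 G := by positivity
    have hstep : (J.edgeSet.ncard : ℝ) / ((J.verts.ncard : ℝ) - 2 + 1 / m2 G)
        ≤ (J.edgeSet.ncard : ℝ) * m2 G := by
      have h9 : (J.edgeSet.ncard : ℝ) / ((J.verts.ncard : ℝ) - 2 + 1 / m2 G)
          ≤ (J.edgeSet.ncard : ℝ) / (1 / m2 G) :=
        div_le_div_of_nonneg_left (Nat.cast_nonneg _) hm' (by linarith)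
      calc (J.edgeSet.ncard : ℝ) / ((J.verts.ncard : ℝ) - 2 + 1 / m2 G)
          ≤ (J.edgeSet.ncard : ℝ) / (1 / m2 G) := h9
      _ = (J.edgeSet.ncard : ℝ) * m2 G := by rw [one_div, div_inv_eq_mul]
    have : (J.edgeSet.ncard : ℝ) * m2 G ≤ (Fintype.card (Sym2 W) : ℝ) * m2 G :=
      mul_le_mul_of_nonneg_right hle hm.le
    linarith

private lemma m2_le_m2a {V W : Type*} [Fintype V] [Fintype W] {G : SimpleGraph V}
    {H : SimpleGraph W} (hG : G.edgeSet.ncard ≠ 0) (hH : H.edgeSet.Nonempty)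
    (hm : 0 < m2 G) : m2 G ≤ m2a G H := by
  obtain ⟨z, hz⟩ := hH
  revert hz
  induction z using Sym2.inductionOn with
  | hf u v =>
    intro hz
    rw [SimpleGraph.mem_edgeSet] at hz
    have hv : (H.subgraphOfAdj hz).verts.ncard = 2 := Set.ncard_pair hz.ne
    have he : (H.subgraphOfAdj hz).edgeSet.ncard = 1 := by
      rw [SimpleGraph.edgeSet_subgraphOfAdj]; exact Set.ncard_singleton _
    have hmem : d2a G 2 1 ∈
        {x : ℝ | ∃ J : H.Subgraph, x = d2a G J.verts.ncard J.edgeSet.ncard} :=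
      ⟨H.subgraphOfAdj hz, by rw [hv, he]⟩
    have hle := le_csSup (bddAbove_d2aset G H hm) hmem
    have heval : d2a G 2 1 = m2 G := by
      unfold d2a
      rw [if_neg (by push_neg; exact ⟨hG, one_ne_zero⟩)]
      have h2 : ((2:ℕ):ℝ) - 2 + 1 / m2 G = 1 / m2 G := by push_cast; ring
      rw [h2]
      rw [Nat.cast_one, one_div_one_div]
    unfold m2a
    linarith



private lemma pullback_card {VH VT : Type*} (H : SimpleGraph VH) {T : SimpleGraph VT}
    (J : T.Subgraph) (f : VH ↪ VT) :
    ∃ Je : H.Subgraph, Je.verts.ncard = (J.verts ∩ Set.range ⇑f).ncard ∧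
      Je.edgeSet.ncard = (J.edgeSet ∩ copyEdges H f).ncard := by
  classical
  refine ⟨⟨⇑f ⁻¹' J.verts, (fun a b => H.Adj a b ∧ s(f a, f b) ∈ J.edgeSet),
    (fun h => h.1), (fun h => J.edge_vert (SimpleGraph.Subgraph.mem_edgeSet.1 h.2)),
    ⟨fun a b h => ⟨h.1.symm, by rw [Sym2.eq_swap]; exact h.2⟩⟩⟩, ?_, ?_⟩
  · show (⇑f ⁻¹' J.verts).ncard = _
    rw [← Set.ncard_image_of_injective _ f.injective, Set.image_preimage_eq_inter_range]
  · have hinj : Function.Injective (Sym2.map ⇑f) := Sym2.map.injective f.injective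
    rw [← Set.ncard_image_of_injective _ hinj]
    congr 1
    ext z
    constructor
    · rintro ⟨w, hw, rfl⟩
      revert hw
      induction w using Sym2.inductionOn with
      | hf a b =>
        intro hw
        rw [SimpleGraph.Subgraph.mem_edgeSet] at hw
        rw [Sym2.map_pair_eq]
        exact ⟨hw.2, s(a, b), (SimpleGraph.mem_edgeSet _).2 hw.1, Sym2.map_pair_eq ⇑f a b⟩
    · rintro ⟨hzJ, w, hwH, rfl⟩
      revert hzJ hwH
      induction w using Sym2.inductionOn with
      | hf a b =>
        intro h1 h2
        refine ⟨s(a, b), ?_, rfl⟩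
        rw [SimpleGraph.Subgraph.mem_edgeSet]
        exact ⟨(SimpleGraph.mem_edgeSet _).1 h1, by rwa [Sym2.map_pair_eq] at h2⟩

/-- Lemma 10: let `G` be a graph that is not a matching, `H` nonempty, and
`G₋ ⊆ G` a spanning subgraph with one edge fewer.  Let `T ∈ F(G₋,H)` be witnessed by a
central copy `central` of `G₋` and pairwise edge-disjoint copies `cov e` of `H` (one for each
edge `e` of `G₋`, containing the image of `e`), whose edges make up all of `T` and whose
vertices together with the central copy exhaust the vertices of `T`.  If the pair `{x,y}`
completes the central copy of `G₋` to a copy of `G`, then every subgraph `J ⊆ T` containing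
`central x` and `central y` satisfies `v(J) - e(J)/m₂(G,H) ≥ 2 - L(T)`, where
`L(T) = v_{G₋} + e_{G₋}(v_H - 2) - v(T)`. -/
theorem stmt6 {VG VH VT : Type*} [Fintype VG] [Fintype VH] [Fintype VT]
    (G Gm : SimpleGraph VG) (H : SimpleGraph VH) (T : SimpleGraph VT)
    (hGmatch : ¬ IsMatchingGraph G) (hHne : H.edgeSet.Nonempty)
    (hsub : Gm ≤ G) (hedges : Gm.edgeSet.ncard = G.edgeSet.ncard - 1)
    (central : VG ↪ VT) (cov : Gm.edgeSet → (VH ↪ VT))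
    (hcentral : IsCopy Gm T central)
    (hcov : ∀ e : Gm.edgeSet, IsCopy H T (cov e))
    (hdisj : ∀ e e' : Gm.edgeSet, e ≠ e' →
      Disjoint (copyEdges H (cov e)) (copyEdges H (cov e')))
    (hin : ∀ e : Gm.edgeSet, Sym2.map (⇑central) e.1 ∈ copyEdges H (cov e))
    (hedgeT : T.edgeSet = ⋃ e : Gm.edgeSet, copyEdges H (cov e))
    (hvertT : (Set.univ : Set VT) =
      Set.range (⇑central) ∪ ⋃ e : Gm.edgeSet, Set.range (⇑(cov e)))
    (x y : VG) (hxy : G.Adj x y) (hnxy : ¬ Gm.Adj x y)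
    (J : T.Subgraph) (hxJ : central x ∈ J.verts) (hyJ : central y ∈ J.verts) :
    2 - ((Fintype.card VG : ℝ) + (Gm.edgeSet.ncard : ℝ) * ((Fintype.card VH : ℝ) - 2) -
          (Fintype.card VT : ℝ)) ≤
      (J.verts.ncard : ℝ) - (J.edgeSet.ncard : ℝ) / m2a G H := by
  classical
  have hcinj : Function.Injective ⇑central := central.injective
  have hx_ne_y : x ≠ y := hxy.ne
  have hGe : G.edgeSet.ncard ≠ 0 := by
    intro h0
    rw [Set.ncard_eq_zero (Set.toFinite _)] at h0
    have hmem : s(x, y) ∈ G.edgeSet := (SimpleGraph.mem_edgeSet _).2 hxy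
    rw [h0] at hmem
    exact hmem
  have hm2G : 0 < m2 G := m2_pos hxy
  have hm2a : 0 < m2a G H := lt_of_lt_of_le hm2G (m2_le_m2a hGe hHne hm2G)
  -- choose endpoints for each edge of Gm
  have hex : ∀ e : Gm.edgeSet, ∃ w : VG × VG, Gm.Adj w.1 w.2 ∧ (e : Sym2 VG) = s(w.1, w.2) := by
    rintro ⟨z, hz⟩
    revert hz
    induction z using Sym2.inductionOn with
    | hf a b =>
      intro hz
      exact ⟨(a, b), (SimpleGraph.mem_edgeSet _).1 hz, rfl⟩
  choose q hadj hrep using hex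
  -- finite objects
  set C : Finset VT := Finset.univ.map central with hCdef
  set W : Gm.edgeSet → Finset VT := fun e => Finset.univ.map (cov e) with hWdef
  have hWcoe : ∀ e, ((W e : Finset VT) : Set VT) = Set.range ⇑(cov e) := by
    intro e; simp only [hWdef, Finset.coe_map, Finset.coe_univ, Set.image_univ]
  set Jv : Finset VT := J.verts.toFinset with hJvdef
  set U : Gm.edgeSet → Finset VT := fun e => Jv ∩ W e with hUdef
  set ends : Gm.edgeSet → Finset VT := fun e => {central (q e).1, central (q e).2} with hendsdef
  set EdF : Gm.edgeSet → Finset (Sym2 VT) := fun e => (J.edgeSet ∩ copyEdges H (cov e)).toFinset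
    with hEdFdef
  set S : Finset Gm.edgeSet := Finset.univ.filter (fun e => (EdF e).Nonempty) with hSdef
  -- basic membership facts
  have hcxC : central x ∈ C := by
    rw [hCdef]; exact Finset.mem_map_of_mem central (Finset.mem_univ x)
  have hcyC : central y ∈ C := by
    rw [hCdef]; exact Finset.mem_map_of_mem central (Finset.mem_univ y)
  have hmemW : ∀ (e : Gm.edgeSet) (u : VG),
      central u ∈ Sym2.map (⇑central) (e : Sym2 VG) → central u ∈ W e := by
    intro e u hu
    obtain ⟨w, hwH, hmap⟩ := hin e
    rw [← hmap, Sym2.mem_map] at hu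
    obtain ⟨a, _, ha⟩ := hu
    simp only [hWdef]
    rw [← ha]
    exact Finset.mem_map_of_mem (cov e) (Finset.mem_univ a)
  have hends_sub : ∀ e, ends e ⊆ W e ∩ C := by
    intro e v hv
    simp only [hendsdef, Finset.mem_insert, Finset.mem_singleton] at hv
    have hv' : ∃ u : VG, central u = v ∧ central u ∈ Sym2.map (⇑central) (e : Sym2 VG) := by
      rcases hv with rfl | rfl
      · exact ⟨(q e).1, rfl, by rw [hrep e, Sym2.map_pair_eq]; exact Sym2.mem_iff.2 (Or.inl rfl)⟩
      · exact ⟨(q e).2, rfl, by rw [hrep e, Sym2.map_pair_eq]; exact Sym2.mem_iff.2 (Or.inr rfl)⟩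
    obtain ⟨u, rfl, hu⟩ := hv'
    exact Finset.mem_inter.2 ⟨hmemW e u hu,
      by rw [hCdef]; exact Finset.mem_map_of_mem central (Finset.mem_univ u)⟩
  have hends2 : ∀ e, (ends e).card = 2 := by
    intro e
    simp only [hendsdef]
    exact Finset.card_pair (fun hq => (hadj e).ne (hcinj hq))
  have hWcard : ∀ e, (W e).card = Fintype.card VH := by
    intro e; simp only [hWdef]; rw [Finset.card_map, Finset.card_univ]
  have hUW : ∀ e, U e ⊆ W e := by
    intro e; simp only [hUdef]; exact Finset.inter_subset_right
  have hcover : ∀ v : VT, v ∈ C ∨ ∃ e, v ∈ W e := by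
    intro v
    have hv : v ∈ (Set.univ : Set VT) := Set.mem_univ v
    rw [hvertT] at hv
    rcases hv with hv | hv
    · left
      obtain ⟨a, rfl⟩ := hv
      rw [hCdef]; exact Finset.mem_map_of_mem central (Finset.mem_univ a)
    · right
      rw [Set.mem_iUnion] at hv
      obtain ⟨e, a, rfl⟩ := hv
      exact ⟨e, by simp only [hWdef]; exact Finset.mem_map_of_mem (cov e) (Finset.mem_univ a)⟩
  -- the counting inequality
  have hcount := counting C W U ends (central x) (central y) S (Fintype.card VH)
    hcxC hcyC hUW hends_sub hends2 hWcard hcover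
  set A : Finset VT := {central x, central y} ∪ S.biUnion U with hAdef
  set P : Finset VT := {central x, central y} ∪ S.biUnion ends with hPdef
  -- A is inside the vertex set of J
  have hxJv : central x ∈ Jv := by rw [hJvdef]; exact Set.mem_toFinset.2 hxJ
  have hyJv : central y ∈ Jv := by rw [hJvdef]; exact Set.mem_toFinset.2 hyJ
  have hAJv : A ⊆ Jv := by
    rw [hAdef]
    apply Finset.union_subset
    · intro v hv
      rcases Finset.mem_insert.1 hv with rfl | hv
      · exact hxJv
      · rw [Finset.mem_singleton] at hv; exact hv ▸ hyJv
    · apply Finset.biUnion_subset.2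
      intro e _
      simp only [hUdef]
      exact Finset.inter_subset_left
  -- edge decomposition
  have hdisj' : ∀ e ∈ (Finset.univ : Finset Gm.edgeSet), ∀ f ∈ (Finset.univ : Finset Gm.edgeSet),
      e ≠ f → Disjoint (EdF e) (EdF f) := by
    intro e _ f _ hef
    have hd := hdisj e f hef
    rw [Finset.disjoint_left]
    intro z hze hzf
    simp only [hEdFdef, Set.mem_toFinset] at hze hzf
    exact (Set.disjoint_left.1 hd hze.2) hzf.2
  have hJEeq : J.edgeSet.toFinset = Finset.univ.biUnion EdF := by
    ext z
    simp only [Set.mem_toFinset, Finset.mem_biUnion, Finset.mem_univ, true_and]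
    constructor
    · intro hz
      have hzT : z ∈ T.edgeSet := J.edgeSet_subset hz
      rw [hedgeT, Set.mem_iUnion] at hzT
      obtain ⟨e, he⟩ := hzT
      exact ⟨e, by simp only [hEdFdef, Set.mem_toFinset]; exact ⟨hz, he⟩⟩
    · rintro ⟨e, hze⟩
      simp only [hEdFdef, Set.mem_toFinset] at hze
      exact hze.1
  have hEdecomp : J.edgeSet.ncard = ∑ e, (EdF e).card := by
    rw [Set.ncard_eq_toFinset_card', hJEeq, Finset.card_biUnion hdisj']
  -- each nonempty copy has ≥ 2 vertices in J
  have hU2 : ∀ e ∈ S, 2 ≤ (U e).card := by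
    intro e heS
    rw [hSdef, Finset.mem_filter] at heS
    obtain ⟨z, hz⟩ := heS.2
    simp only [hEdFdef, Set.mem_toFinset] at hz
    obtain ⟨hzJ, w, hwH, hmap⟩ := hz
    rw [← hmap] at hzJ
    revert hzJ
    induction w using Sym2.inductionOn with
    | hf a b =>
      intro hzJ
      rw [Sym2.map_pair_eq, SimpleGraph.Subgraph.mem_edgeSet] at hzJ
      have hne' : cov e a ≠ cov e b := (J.adj_sub hzJ).ne
      have hsub2 : ({cov e a, cov e b} : Finset VT) ⊆ U e := by
        simp only [hUdef]
        intro v hv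
        rcases Finset.mem_insert.1 hv with rfl | hv
        · exact Finset.mem_inter.2 ⟨by rw [hJvdef]; exact Set.mem_toFinset.2 (J.edge_vert hzJ),
            by simp only [hWdef]; exact Finset.mem_map_of_mem (cov e) (Finset.mem_univ a)⟩
        · rw [Finset.mem_singleton] at hv
          subst hv
          exact Finset.mem_inter.2
            ⟨by rw [hJvdef]; exact Set.mem_toFinset.2 (J.edge_vert hzJ.symm),
             by simp only [hWdef]; exact Finset.mem_map_of_mem (cov e) (Finset.mem_univ b)⟩
      calc 2 = ({cov e a, cov e b} : Finset VT).card := (Finset.card_pair hne').symm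
      _ ≤ _ := Finset.card_le_card hsub2
  -- per-copy density bound
  have hpc : ∀ e ∈ S, ((EdF e).card : ℝ) ≤ m2a G H * (((U e).card : ℝ) - 2 + 1 / m2 G) := by
    intro e heS
    have hU2e : 2 ≤ (U e).card := hU2 e heS
    rw [hSdef, Finset.mem_filter] at heS
    have hEne : (EdF e).card ≠ 0 := by
      have := Finset.card_pos.2 heS.2
      omega
    obtain ⟨Je, hJev, hJee⟩ := pullback_card H J (cov e)
    have hUe : (J.verts ∩ Set.range ⇑(cov e)).ncard = (U e).card := by
      have h2 : ((U e : Finset VT) : Set VT) = J.verts ∩ Set.range ⇑(cov e) := by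
        simp only [hUdef, Finset.coe_inter, hJvdef, Set.coe_toFinset]
        rw [hWcoe e]
      rw [← h2, Set.ncard_coe_finset]
    have hEe : (J.edgeSet ∩ copyEdges H (cov e)).ncard = (EdF e).card := by
      simp only [hEdFdef]
      exact Set.ncard_eq_toFinset_card' _
    rw [hUe] at hJev
    rw [hEe] at hJee
    have hle : d2a G Je.verts.ncard Je.edgeSet.ncard ≤ m2a G H := by
      have := le_csSup (bddAbove_d2aset G H hm2G)
        (Set.mem_setOf.2 ⟨Je, rfl⟩ :
          d2a G Je.verts.ncard Je.edgeSet.ncard ∈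
            {x : ℝ | ∃ J' : H.Subgraph, x = d2a G J'.verts.ncard J'.edgeSet.ncard})
      rw [m2a]
      exact this
    rw [hJev, hJee] at hle
    have hdenom : (0:ℝ) < ((U e).card : ℝ) - 2 + 1 / m2 G := by
      have h2 : (2:ℝ) ≤ ((U e).card : ℝ) := by exact_mod_cast hU2e
      have : (0:ℝ) < 1 / m2 G := by positivity
      linarith
    have heval : d2a G (U e).card (EdF e).card
        = ((EdF e).card : ℝ) / (((U e).card : ℝ) - 2 + 1 / m2 G) := by
      unfold d2a
      rw [if_neg (by push_neg; exact ⟨hGe, hEne⟩)]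
    rw [heval, div_le_iff₀ hdenom] at hle
    exact hle
  -- the key upper bound on e(J)/m2a
  have hkey : (J.edgeSet.ncard : ℝ) / m2a G H
      ≤ (∑ e ∈ S, ((U e).card : ℝ)) - 2 * (S.card : ℝ) + (P.card : ℝ) - 2 := by
    rcases Finset.eq_empty_or_nonempty S with hS | hSne
    · have hzero : ∀ e : Gm.edgeSet, (EdF e).card = 0 := by
        intro e
        by_contra h
        have hmemS : e ∈ S := by
          rw [hSdef, Finset.mem_filter]
          exact ⟨Finset.mem_univ e, Finset.card_pos.1 (Nat.pos_of_ne_zero h)⟩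
        rw [hS] at hmemS
        exact Finset.notMem_empty e hmemS
      have heJ0 : J.edgeSet.ncard = 0 := by
        rw [hEdecomp]
        exact Finset.sum_eq_zero fun e _ => hzero e
      have hPcard : P.card = 2 := by
        rw [hPdef, hS]
        simp only [Finset.biUnion_empty, Finset.union_empty]
        exact Finset.card_pair (fun h => hx_ne_y (hcinj h))
      rw [heJ0, hS, hPcard]
      simp
    · -- the auxiliary subgraph of G on the edges of S together with {x,y}
      have hSP : (S.card : ℝ) / m2 G ≤ (P.card : ℝ) - 2 := by
        set ES : Set (Sym2 VG) := insert s(x, y) (Subtype.val '' (↑S : Set Gm.edgeSet))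
          with hESdef
        set Vs : Set VG := {x, y} ∪ ⋃ e ∈ (↑S : Set Gm.edgeSet), ({(q e).1, (q e).2} : Set VG)
          with hVsdef
        have hGhex : ∃ Gh : G.Subgraph, Gh.verts = Vs ∧ Gh.edgeSet = ES := by
          refine ⟨⟨Vs, (fun a b => a ≠ b ∧ s(a, b) ∈ ES), ?_, ?_, ?_⟩, rfl, ?_⟩
          · rintro a b ⟨hne, hab⟩
            rcases Set.mem_insert_iff.1 hab with heq | ⟨e, heS, heq⟩
            · rcases Sym2.eq_iff.1 heq with ⟨rfl, rfl⟩ | ⟨rfl, rfl⟩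
              · exact hxy
              · exact hxy.symm
            · rcases Sym2.eq_iff.1 ((hrep e).symm.trans heq) with ⟨h1, h2⟩ | ⟨h1, h2⟩
              · rw [← h1, ← h2]; exact hsub (hadj e)
              · rw [← h1, ← h2]; exact (hsub (hadj e)).symm
          · rintro a b ⟨hne, hab⟩
            rcases Set.mem_insert_iff.1 hab with heq | ⟨e, heS, heq⟩
            · rcases Sym2.eq_iff.1 heq with ⟨rfl, _⟩ | ⟨rfl, _⟩
              · rw [hVsdef]; exact Set.mem_union_left _ (Set.mem_insert _ _)
              · rw [hVsdef]; exact Set.mem_union_left _ (Set.mem_insert_of_mem _ rfl)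
            · rcases Sym2.eq_iff.1 ((hrep e).symm.trans heq) with ⟨h1, _⟩ | ⟨_, h2⟩
              · rw [hVsdef]
                exact Set.mem_union_right _
                  (Set.mem_biUnion heS (by rw [← h1]; exact Set.mem_insert _ _))
              · rw [hVsdef]
                exact Set.mem_union_right _
                  (Set.mem_biUnion heS (by rw [← h2]; exact Set.mem_insert_of_mem _ rfl))
          · refine ⟨?_⟩; rintro a b ⟨hne, hab⟩
            exact ⟨hne.symm, by rwa [Sym2.eq_swap]⟩
          · apply Set.Subset.antisymm
            · intro z hz
              revert hz
              induction z using Sym2.inductionOn with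
              | hf a b =>
                intro hz
                exact ((SimpleGraph.Subgraph.mem_edgeSet).1 hz).2
            · intro z hz
              revert hz
              induction z using Sym2.inductionOn with
              | hf a b =>
                intro hz
                refine (SimpleGraph.Subgraph.mem_edgeSet).2 ⟨?_, hz⟩
                rcases Set.mem_insert_iff.1 hz with heq | ⟨e, heS, heq⟩
                · rcases Sym2.eq_iff.1 heq with ⟨rfl, rfl⟩ | ⟨rfl, rfl⟩
                  · exact hx_ne_y
                  · exact hx_ne_y.symm
                · rcases Sym2.eq_iff.1 ((hrep e).symm.trans heq) with ⟨h1, h2⟩ | ⟨h1, h2⟩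
                  · rw [← h1, ← h2]; exact (hadj e).ne
                  · rw [← h1, ← h2]; exact (hadj e).ne.symm
        obtain ⟨Gh, hGhV, hGhE⟩ := hGhex
        have hxyES : s(x, y) ∉ Subtype.val '' (↑S : Set Gm.edgeSet) := by
          rintro ⟨e, _, heq⟩
          have hp := e.2
          rw [heq] at hp
          exact hnxy ((SimpleGraph.mem_edgeSet _).1 hp)
        have hEScard : ES.ncard = S.card + 1 := by
          rw [hESdef, Set.ncard_insert_of_notMem hxyES (Set.toFinite _),
            Set.ncard_image_of_injective _ Subtype.val_injective, Set.ncard_coe_finset]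
        have himg : ⇑central '' Vs = ((P : Finset VT) : Set VT) := by
          rw [hVsdef, hPdef]
          ext v
          simp only [Set.mem_image, Set.mem_union, Set.mem_insert_iff, Set.mem_singleton_iff,
            Set.mem_iUnion, Finset.coe_union, Finset.coe_biUnion, Finset.mem_coe,
            Finset.mem_insert, Finset.mem_singleton, hendsdef, exists_prop]
          constructor
          · rintro ⟨u, hu, rfl⟩
            rcases hu with (rfl | rfl) | ⟨e, heS, rfl | rfl⟩
            · exact Or.inl (Or.inl rfl)
            · exact Or.inl (Or.inr rfl)
            · exact Or.inr ⟨e, heS, Or.inl rfl⟩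
            · exact Or.inr ⟨e, heS, Or.inr rfl⟩
          · rintro ((rfl | rfl) | ⟨e, heS, rfl | rfl⟩)
            · exact ⟨x, Or.inl (Or.inl rfl), rfl⟩
            · exact ⟨y, Or.inl (Or.inr rfl), rfl⟩
            · exact ⟨(q e).1, Or.inr ⟨e, heS, Or.inl rfl⟩, rfl⟩
            · exact ⟨(q e).2, Or.inr ⟨e, heS, Or.inr rfl⟩, rfl⟩
        have hVscard : Vs.ncard = P.card := by
          calc Vs.ncard = (⇑central '' Vs).ncard :=
              (Set.ncard_image_of_injective _ hcinj).symm
          _ = ((P : Finset VT) : Set VT).ncard := by rw [himg]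
          _ = P.card := Set.ncard_coe_finset _
        have hP3 : 3 ≤ P.card := by
          obtain ⟨e0, he0S⟩ := hSne
          have hne12 : (q e0).1 ≠ (q e0).2 := (hadj e0).ne
          have hGm0 : s((q e0).1, (q e0).2) ∈ Gm.edgeSet := by
            rw [← hrep e0]; exact e0.2
          have hnotboth : ¬((q e0).1 = x ∨ (q e0).1 = y) ∨ ¬((q e0).2 = x ∨ (q e0).2 = y) := by
            by_contra hcon
            push_neg at hcon
            obtain ⟨h1, h2⟩ := hcon
            rcases h1 with rfl | rfl <;> rcases h2 with h2 | h2
            · exact hne12 h2.symm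
            · rw [h2] at hGm0
              exact hnxy ((SimpleGraph.mem_edgeSet _).1 hGm0)
            · rw [h2] at hGm0
              exact hnxy ((SimpleGraph.mem_edgeSet _).1 hGm0).symm
            · exact hne12 h2.symm
          have hw : ∃ w : VG, (w = (q e0).1 ∨ w = (q e0).2) ∧ w ≠ x ∧ w ≠ y := by
            rcases hnotboth with h | h
            · push_neg at h
              exact ⟨(q e0).1, Or.inl rfl, h⟩
            · push_neg at h
              exact ⟨(q e0).2, Or.inr rfl, h⟩
          obtain ⟨w, hw1, hwx, hwy⟩ := hw
          have hwP : central w ∈ P := by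
            rw [hPdef]
            apply Finset.mem_union_right
            refine Finset.mem_biUnion.2 ⟨e0, he0S, ?_⟩
            simp only [hendsdef, Finset.mem_insert, Finset.mem_singleton]
            rcases hw1 with rfl | rfl
            · exact Or.inl rfl
            · exact Or.inr rfl
          have hxP : central x ∈ P := by
            rw [hPdef]; exact Finset.mem_union_left _ (Finset.mem_insert_self _ _)
          have hyP : central y ∈ P := by
            rw [hPdef]
            exact Finset.mem_union_left _
              (Finset.mem_insert_of_mem (Finset.mem_singleton_self _))
          have hsub3 : ({central x, central y, central w} : Finset VT) ⊆ P := by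
            intro v hv
            rcases Finset.mem_insert.1 hv with rfl | hv
            · exact hxP
            · rcases Finset.mem_insert.1 hv with rfl | hv
              · exact hyP
              · rw [Finset.mem_singleton] at hv
                exact hv ▸ hwP
          have hcard3 : ({central x, central y, central w} : Finset VT).card = 3 := by
            rw [Finset.card_insert_of_notMem, Finset.card_pair]
            · exact fun h => hwy (hcinj h).symm
            · simp only [Finset.mem_insert, Finset.mem_singleton]
              push_neg
              exact ⟨fun h => hx_ne_y (hcinj h), fun h => hwx (hcinj h).symm⟩
          calc 3 = ({central x, central y, central w} : Finset VT).card := hcard3.symm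
          _ ≤ P.card := Finset.card_le_card hsub3
        have hd2 : d2 Gh.verts.ncard Gh.edgeSet.ncard ≤ m2 G := by
          have hmem : d2 Gh.verts.ncard Gh.edgeSet.ncard ∈
              {x : ℝ | ∃ J' : G.Subgraph, x = d2 J'.verts.ncard J'.edgeSet.ncard} := ⟨Gh, rfl⟩
          have := le_csSup (bddAbove_d2set G) hmem
          rw [m2]
          exact this
        rw [hGhV, hGhE, hVscard, hEScard] at hd2
        have heval : d2 P.card (S.card + 1) = (S.card : ℝ) / ((P.card : ℝ) - 2) := by
          unfold d2
          rw [if_neg (by omega : ¬(S.card + 1 = 0)), if_pos hP3]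
          push_cast
          ring_nf
        rw [heval] at hd2
        have hdenom : (0:ℝ) < (P.card : ℝ) - 2 := by
          have h3 : (3:ℝ) ≤ (P.card : ℝ) := by exact_mod_cast hP3
          linarith
        rw [div_le_iff₀ hdenom] at hd2
        rw [div_le_iff₀ hm2G]
        linear_combination hd2
      -- sum the per-copy bounds
      have hsum0 : (∑ e ∈ S, (EdF e).card) = J.edgeSet.ncard := by
        rw [hEdecomp]
        refine Finset.sum_subset (Finset.subset_univ S) ?_
        intro e _ heS
        rw [hSdef, Finset.mem_filter] at heS
        push_neg at heS
        have := heS (Finset.mem_univ e)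
        rw [this, Finset.card_empty]
      have h1 : (J.edgeSet.ncard : ℝ) = ∑ e ∈ S, ((EdF e).card : ℝ) := by
        rw [← hsum0]
        push_cast
        rfl
      have h2 : ∑ e ∈ S, ((EdF e).card : ℝ)
          ≤ ∑ e ∈ S, m2a G H * (((U e).card : ℝ) - 2 + 1 / m2 G) :=
        Finset.sum_le_sum hpc
      have h3 : ∑ e ∈ S, m2a G H * (((U e).card : ℝ) - 2 + 1 / m2 G)
          = m2a G H * ((∑ e ∈ S, ((U e).card : ℝ)) - 2 * (S.card : ℝ)
            + (S.card : ℝ) * (1 / m2 G)) := by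
        rw [← Finset.mul_sum]
        congr 1
        rw [Finset.sum_add_distrib, Finset.sum_sub_distrib, Finset.sum_const, Finset.sum_const]
        push_cast
        ring
      have h4 : (J.edgeSet.ncard : ℝ) ≤ m2a G H * ((∑ e ∈ S, ((U e).card : ℝ))
          - 2 * (S.card : ℝ) + (S.card : ℝ) * (1 / m2 G)) := by
        rw [h1]
        calc ∑ e ∈ S, ((EdF e).card : ℝ) ≤ _ := h2
        _ = _ := h3
      have h5 : (J.edgeSet.ncard : ℝ) / m2a G H ≤ (∑ e ∈ S, ((U e).card : ℝ))
          - 2 * (S.card : ℝ) + (S.card : ℝ) * (1 / m2 G) := by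
        rw [div_le_iff₀ hm2a]
        calc (J.edgeSet.ncard : ℝ) ≤ _ := h4
        _ = _ := by ring
      have h6 : (S.card : ℝ) * (1 / m2 G) = (S.card : ℝ) / m2 G := mul_one_div _ _
      rw [h6] at h5
      linarith [hSP]
  -- final assembly
  have hcountR : (∑ e ∈ S, ((U e).card : ℝ)) + (P.card : ℝ) + (Fintype.card VT : ℝ)
      + 2 * (Fintype.card Gm.edgeSet : ℝ)
      ≤ (A.card : ℝ) + 2 * (S.card : ℝ) + (C.card : ℝ)
        + (Fintype.card Gm.edgeSet : ℝ) * (Fintype.card VH : ℝ) := by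
    exact_mod_cast hcount
  have hCcard : (C.card : ℝ) = (Fintype.card VG : ℝ) := by
    rw [hCdef, Finset.card_map, Finset.card_univ]
  have hng : (Gm.edgeSet.ncard : ℝ) = (Fintype.card Gm.edgeSet : ℝ) := by
    rw [← Nat.card_coe_set_eq, Nat.card_eq_fintype_card]
  have hAcard : (A.card : ℝ) ≤ (J.verts.ncard : ℝ) := by
    have h1 : A.card ≤ Jv.card := Finset.card_le_card hAJv
    have h2 : Jv.card = J.verts.ncard := by
      rw [hJvdef, Set.ncard_eq_toFinset_card']
    rw [← h2]
    exact_mod_cast h1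
  have hexp : (Fintype.card Gm.edgeSet : ℝ) * ((Fintype.card VH : ℝ) - 2)
      = (Fintype.card Gm.edgeSet : ℝ) * (Fintype.card VH : ℝ)
        - 2 * (Fintype.card Gm.edgeSet : ℝ) := by ring
  rw [hng]
  linarith [hkey, hcountR, hAcard, hexp, hCcard]
end AsymRamsey
end

section
/- For any two nonempty graphs G and H with v_H ≥ 3, the following three statements are equivalent: (i) H is strictly balanced with respect to d_2(G,·); (ii) m_2(G,H) < m*(H); (iii) m_2(G) < x*(H). -/
open scoped Classical

namespace AsymRamsey

lemma subgraph_finite {W : Type*} [Finite W] (H : SimpleGraph W) : Finite H.Subgraph := by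
  have hinj : Function.Injective (fun J : H.Subgraph => (J.verts, J.Adj)) := by
    intro J K h
    simp only [Prod.mk.injEq] at h
    exact SimpleGraph.Subgraph.ext h.1 h.2
  exact Finite.of_injective _ hinj

lemma valSet_finite {W : Type*} [Finite W] (H : SimpleGraph W) (f : H.Subgraph → ℝ) :
    {x : ℝ | ∃ J : H.Subgraph, x = f J}.Finite := by
  have := subgraph_finite H
  exact (Set.finite_range f).subset (by rintro x ⟨J, rfl⟩; exact ⟨J, rfl⟩)

lemma key_arith (c nR mR vR eR : ℝ) (hc : 0 < c) (hv : 2 ≤ vR) (hvn : vR < nR) :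
    eR / (vR - 2 + c) < mR / (nR - 2 + c) ↔
      mR / (nR - 2 + c) < (mR - eR) / (nR - vR) := by
  have hA : 0 < vR - 2 + c := by linarith
  have hB : 0 < nR - 2 + c := by linarith
  have hC : 0 < nR - vR := by linarith
  rw [div_lt_div_iff₀ hA hB, div_lt_div_iff₀ hB hC]
  constructor <;> intro h <;> nlinarith

/-- Lemma 4: for nonempty graphs `G`, `H` with `v_H ≥ 3`, the following are
equivalent: (i) `H` is strictly balanced w.r.t. `d₂(G,·)`; (ii) `m₂(G,H) < m*(H)`;
(iii) `m₂(G) < x*(H)`. -/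
theorem stmt7 {V W : Type*} [Fintype V] [Fintype W]
    (G : SimpleGraph V) (H : SimpleGraph W)
    (hGne : G.edgeSet.Nonempty) (hHne : H.edgeSet.Nonempty) (hW : 3 ≤ Fintype.card W) :
    (StrictlyBalancedW G H ↔ m2a G H < mStar H) ∧
    (StrictlyBalancedW G H ↔ m2 G < xStar H) := by
  classical
  have hfinsub := subgraph_finite H
  -- basic cardinality facts
  have hGcard : G.edgeSet.ncard ≠ 0 := by
    rw [Ne, Set.ncard_eq_zero (Set.toFinite _)]
    exact hGne.ne_empty
  have hm1 : 1 ≤ H.edgeSet.ncard := by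
    rw [Nat.one_le_iff_ne_zero, Ne, Set.ncard_eq_zero (Set.toFinite _)]
    exact hHne.ne_empty
  have hmR : (1 : ℝ) ≤ (H.edgeSet.ncard : ℝ) := by exact_mod_cast hm1
  have hnR : (3 : ℝ) ≤ (Fintype.card W : ℝ) := by exact_mod_cast hW
  -- m2 G > 0
  have hμ : 0 < m2 G := by
    obtain ⟨e, he⟩ := hGne
    induction e using Sym2.ind with
    | _ u v =>
      rw [SimpleGraph.mem_edgeSet] at he
      have hmem : (1/2 : ℝ) ∈
          {x : ℝ | ∃ J : G.Subgraph, x = d2 J.verts.ncard J.edgeSet.ncard} := by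
        refine ⟨G.subgraphOfAdj he, ?_⟩
        have hv : (G.subgraphOfAdj he).verts = {u, v} := rfl
        rw [hv, G.edgeSet_subgraphOfAdj he, Set.ncard_pair he.ne, Set.ncard_singleton]
        norm_num [d2]
      have hle : (1/2 : ℝ) ≤ m2 G := le_csSup (valSet_finite G _).bddAbove hmem
      linarith
  have hμne : m2 G ≠ 0 := ne_of_gt hμ
  have hcpos : 0 < 1 / m2 G := by positivity
  have hμinv : m2 G * (1 / m2 G) = 1 := by field_simp
  have hBpos : 0 < (Fintype.card W : ℝ) - 2 + 1 / m2 G := by linarith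
  -- d2a formula
  have hf : ∀ v e : ℕ, d2a G v e = (e : ℝ) / ((v : ℝ) - 2 + 1 / m2 G) := by
    intro v e
    by_cases h : e = 0
    · unfold d2a; rw [if_pos (Or.inr h), h]; simp
    · unfold d2a; rw [if_neg (by push_neg; exact ⟨hGcard, h⟩)]
  have hfHpos : 0 < d2a G (Fintype.card W) H.edgeSet.ncard := by
    rw [hf]; exact div_pos (by linarith) hBpos
  -- subgraph facts
  have hvle : ∀ J : H.Subgraph, J.verts.ncard ≤ Fintype.card W := by
    intro J
    rw [← Nat.card_eq_fintype_card, ← Set.ncard_univ]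
    exact Set.ncard_le_ncard (Set.subset_univ _) (Set.toFinite _)
  have hele : ∀ J : H.Subgraph, J.edgeSet.ncard ≤ H.edgeSet.ncard := fun J =>
    Set.ncard_le_ncard J.edgeSet_subset (Set.toFinite _)
  have hv2 : ∀ J : H.Subgraph, J.edgeSet.ncard ≠ 0 → 2 ≤ J.verts.ncard := by
    intro J hJ
    rw [Ne, Set.ncard_eq_zero (Set.toFinite _), ← Ne, ← Set.nonempty_iff_ne_empty] at hJ
    obtain ⟨e, he⟩ := hJ
    induction e using Sym2.ind with
    | _ u v =>
      rw [SimpleGraph.Subgraph.mem_edgeSet] at he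
      have hne : u ≠ v := (J.adj_sub he).ne
      have hsub : ({u, v} : Set W) ⊆ J.verts := by
        intro x hx
        rcases hx with rfl | hx
        · exact J.edge_vert he
        · rw [Set.mem_singleton_iff] at hx; subst hx; exact J.edge_vert (J.adj_symm he)
      calc 2 = ({u, v} : Set W).ncard := (Set.ncard_pair hne).symm
        _ ≤ J.verts.ncard := Set.ncard_le_ncard hsub (Set.toFinite _)
  have htopv : (⊤ : H.Subgraph).verts.ncard = Fintype.card W := by
    rw [SimpleGraph.Subgraph.verts_top, Set.ncard_univ, Nat.card_eq_fintype_card]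
  have htope : (⊤ : H.Subgraph).edgeSet.ncard = H.edgeSet.ncard := by
    rw [SimpleGraph.Subgraph.edgeSet_top]
  have hproper : ∀ J : H.Subgraph, J ≠ ⊤ → J.verts.ncard = Fintype.card W →
      J.edgeSet.ncard < H.edgeSet.ncard := by
    intro J hJ hvn
    rcases lt_or_eq_of_le (hele J) with h | h
    · exact h
    · exfalso; apply hJ
      have hverts : J.verts = Set.univ := by
        apply Set.eq_of_subset_of_ncard_le (Set.subset_univ _) ?_ (Set.toFinite _)
        rw [Set.ncard_univ, Nat.card_eq_fintype_card, hvn]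
      have hedges : J.edgeSet = H.edgeSet :=
        Set.eq_of_subset_of_ncard_le J.edgeSet_subset (le_of_eq h.symm) (Set.toFinite _)
      refine SimpleGraph.Subgraph.ext ?_ ?_
      · rw [hverts, SimpleGraph.Subgraph.verts_top]
      · ext u v
        rw [← SimpleGraph.Subgraph.mem_edgeSet, hedges, SimpleGraph.mem_edgeSet,
          SimpleGraph.Subgraph.top_adj]
  -- m2a facts
  have hm2aS : m2a G H =
      sSup {x : ℝ | ∃ J : H.Subgraph, x = d2a G J.verts.ncard J.edgeSet.ncard} := rfl
  have hSfin : {x : ℝ | ∃ J : H.Subgraph, x = d2a G J.verts.ncard J.edgeSet.ncard}.Finite :=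
    valSet_finite H _
  have hSne : {x : ℝ | ∃ J : H.Subgraph, x = d2a G J.verts.ncard J.edgeSet.ncard}.Nonempty :=
    ⟨d2a G (⊤ : H.Subgraph).verts.ncard (⊤ : H.Subgraph).edgeSet.ncard, ⟨⊤, rfl⟩⟩
  have hm2a_ge : ∀ J : H.Subgraph,
      d2a G J.verts.ncard J.edgeSet.ncard ≤ m2a G H := by
    intro J; rw [hm2aS]; exact le_csSup hSfin.bddAbove ⟨J, rfl⟩
  have hm2a_mem : ∃ J0 : H.Subgraph,
      m2a G H = d2a G J0.verts.ncard J0.edgeSet.ncard := by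
    rw [hm2aS]; exact hSne.csSup_mem hSfin
  have hfH_le : d2a G (Fintype.card W) H.edgeSet.ncard ≤ m2a G H := by
    have := hm2a_ge ⊤; rwa [htopv, htope] at this
  -- mStar facts
  have hmStarT : mStar H =
      sInf {x : ℝ | ∃ J : H.Subgraph, 2 ≤ J.verts.ncard ∧ J.verts.ncard < Fintype.card W ∧
        x = ((H.edgeSet.ncard : ℝ) - (J.edgeSet.ncard : ℝ)) /
            ((Fintype.card W : ℝ) - (J.verts.ncard : ℝ))} := rfl
  have hTfin : {x : ℝ | ∃ J : H.Subgraph, 2 ≤ J.verts.ncard ∧ J.verts.ncard < Fintype.card W ∧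
      x = ((H.edgeSet.ncard : ℝ) - (J.edgeSet.ncard : ℝ)) /
          ((Fintype.card W : ℝ) - (J.verts.ncard : ℝ))}.Finite := by
    refine (valSet_finite H (fun J => ((H.edgeSet.ncard : ℝ) - (J.edgeSet.ncard : ℝ)) /
        ((Fintype.card W : ℝ) - (J.verts.ncard : ℝ)))).subset ?_
    rintro x ⟨J, -, -, rfl⟩; exact ⟨J, rfl⟩
  obtain ⟨eH, heH⟩ := hHne
  have hTne : ∃ J1 : H.Subgraph, J1.verts.ncard = 2 ∧ J1.edgeSet.ncard = 1 := by
    induction eH using Sym2.ind with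
    | _ u v =>
      rw [SimpleGraph.mem_edgeSet] at heH
      refine ⟨H.subgraphOfAdj heH, ?_, ?_⟩
      · have hv : (H.subgraphOfAdj heH).verts = {u, v} := rfl
        rw [hv, Set.ncard_pair heH.ne]
      · rw [H.edgeSet_subgraphOfAdj heH, Set.ncard_singleton]
  obtain ⟨J1, hJ1v, hJ1e⟩ := hTne
  have hT_le : ∀ J : H.Subgraph, 2 ≤ J.verts.ncard → J.verts.ncard < Fintype.card W →
      mStar H ≤ ((H.edgeSet.ncard : ℝ) - (J.edgeSet.ncard : ℝ)) /
        ((Fintype.card W : ℝ) - (J.verts.ncard : ℝ)) := by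
    intro J h1 h2
    rw [hmStarT]; exact csInf_le hTfin.bddBelow ⟨J, h1, h2, rfl⟩
  have hT_mem : ∃ Js : H.Subgraph, 2 ≤ Js.verts.ncard ∧ Js.verts.ncard < Fintype.card W ∧
      mStar H = ((H.edgeSet.ncard : ℝ) - (Js.edgeSet.ncard : ℝ)) /
        ((Fintype.card W : ℝ) - (Js.verts.ncard : ℝ)) := by
    rw [hmStarT]
    have hne : {x : ℝ | ∃ J : H.Subgraph, 2 ≤ J.verts.ncard ∧ J.verts.ncard < Fintype.card W ∧
        x = ((H.edgeSet.ncard : ℝ) - (J.edgeSet.ncard : ℝ)) /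
            ((Fintype.card W : ℝ) - (J.verts.ncard : ℝ))}.Nonempty :=
      ⟨((H.edgeSet.ncard : ℝ) - (J1.edgeSet.ncard : ℝ)) /
          ((Fintype.card W : ℝ) - (J1.verts.ncard : ℝ)), ⟨J1, by omega, by omega, rfl⟩⟩
    exact hne.csInf_mem hTfin
  -- m* (n-2) ≤ m - 1
  have hstar_le : mStar H * ((Fintype.card W : ℝ) - 2) ≤ (H.edgeSet.ncard : ℝ) - 1 := by
    have h := hT_le J1 (by omega) (by omega)
    rw [hJ1v, hJ1e] at h
    push_cast at h
    rw [le_div_iff₀ (by linarith : (0:ℝ) < (Fintype.card W : ℝ) - 2)] at h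
    linarith
  have hD1 : (1 : ℝ) ≤ (H.edgeSet.ncard : ℝ) - mStar H * ((Fintype.card W : ℝ) - 2) := by
    linarith
  have hDpos : (0 : ℝ) < (H.edgeSet.ncard : ℝ) - mStar H * ((Fintype.card W : ℝ) - 2) := by
    linarith
  -- the sup is attained at ⊤ under strict domination
  have hsupP : (∀ J : H.Subgraph, J ≠ ⊤ →
      d2a G J.verts.ncard J.edgeSet.ncard < d2a G (Fintype.card W) H.edgeSet.ncard) →
      m2a G H = d2a G (Fintype.card W) H.edgeSet.ncard := by
    intro hP
    refine le_antisymm ?_ hfH_le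
    rw [hm2aS]
    apply csSup_le hSne
    rintro x ⟨J, rfl⟩
    by_cases hJ : J = ⊤
    · subst hJ; rw [htopv, htope]
    · exact (hP J hJ).le
  -- (i) ↔ P
  have hAiff : StrictlyBalancedW G H ↔ (∀ J : H.Subgraph, J ≠ ⊤ →
      d2a G J.verts.ncard J.edgeSet.ncard < d2a G (Fintype.card W) H.edgeSet.ncard) := by
    constructor
    · rintro ⟨hbal, hstrict⟩ J hJ
      have hbal' : m2a G H = d2a G (Fintype.card W) H.edgeSet.ncard := hbal
      have := hstrict J hJ
      rwa [hbal'] at this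
    · intro hP
      have hsup := hsupP hP
      refine ⟨hsup, fun J hJ => ?_⟩
      rw [hsup]; exact hP J hJ
  -- P ↔ (ii)
  have hBiff : (∀ J : H.Subgraph, J ≠ ⊤ →
      d2a G J.verts.ncard J.edgeSet.ncard < d2a G (Fintype.card W) H.edgeSet.ncard) ↔
      m2a G H < mStar H := by
    constructor
    · intro hP
      rw [hsupP hP]
      obtain ⟨Js, h1, h2, heq⟩ := hT_mem
      have hJne : Js ≠ ⊤ := by
        intro h; rw [h, htopv] at h2; exact lt_irrefl _ h2
      have hlt := hP Js hJne
      rw [hf, hf] at hlt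
      rw [heq, hf]
      exact (key_arith (1 / m2 G) _ _ _ _ hcpos (by exact_mod_cast h1)
        (by exact_mod_cast h2)).mp hlt
    · intro hlt J hJ
      by_cases hE : J.edgeSet.ncard = 0
      · rw [hf, hE]
        simpa using hfHpos
      · have h2 := hv2 J hE
        by_cases hvn : J.verts.ncard < Fintype.card W
        · have hg := hT_le J h2 hvn
          have hchain : d2a G (Fintype.card W) H.edgeSet.ncard <
              ((H.edgeSet.ncard : ℝ) - (J.edgeSet.ncard : ℝ)) /
              ((Fintype.card W : ℝ) - (J.verts.ncard : ℝ)) :=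
            lt_of_lt_of_le (lt_of_le_of_lt hfH_le hlt) hg
          rw [hf] at hchain
          rw [hf, hf]
          exact (key_arith (1 / m2 G) _ _ _ _ hcpos (by exact_mod_cast h2)
            (by exact_mod_cast hvn)).mpr hchain
        · have hveq : J.verts.ncard = Fintype.card W := le_antisymm (hvle J) (not_lt.mp hvn)
          have helt := hproper J hJ hveq
          rw [hf, hf, hveq, div_lt_div_iff₀ hBpos hBpos]
          exact mul_lt_mul_of_pos_right (by exact_mod_cast helt) hBpos
  -- (ii) ↔ (iii)
  have hxs : xStar H = mStar H /
      ((H.edgeSet.ncard : ℝ) - mStar H * ((Fintype.card W : ℝ) - 2)) := rfl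
  have hprod : m2 G * (mStar H * ((Fintype.card W : ℝ) - 2 + 1 / m2 G)) =
      m2 G * mStar H * ((Fintype.card W : ℝ) - 2) + mStar H := by
    field_simp
  have hCiff : m2a G H < mStar H ↔ m2 G < xStar H := by
    rw [hxs, lt_div_iff₀ hDpos]
    constructor
    · intro h
      have hfHlt : (H.edgeSet.ncard : ℝ) / ((Fintype.card W : ℝ) - 2 + 1 / m2 G) < mStar H := by
        rw [← hf]; exact lt_of_le_of_lt hfH_le h
      rw [div_lt_iff₀ hBpos] at hfHlt
      nlinarith [mul_lt_mul_of_pos_left hfHlt hμ, hprod]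
    · intro h
      have hMpos : 0 < mStar H := by
        have h1 := mul_le_mul_of_nonneg_left hD1 hμ.le
        rw [mul_one] at h1
        linarith
      have hfHM : d2a G (Fintype.card W) H.edgeSet.ncard < mStar H := by
        rw [hf, div_lt_iff₀ hBpos]
        nlinarith [hprod, hμ]
      obtain ⟨J0, hJ0⟩ := hm2a_mem
      rw [hJ0]
      by_cases hE : J0.edgeSet.ncard = 0
      · rw [hf, hE]; simpa using hMpos
      · have h2 := hv2 J0 hE
        by_cases hvn : J0.verts.ncard < Fintype.card W
        · have hg := hT_le J0 h2 hvn
          have hchain : d2a G (Fintype.card W) H.edgeSet.ncard <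
              ((H.edgeSet.ncard : ℝ) - (J0.edgeSet.ncard : ℝ)) /
              ((Fintype.card W : ℝ) - (J0.verts.ncard : ℝ)) := lt_of_lt_of_le hfHM hg
          rw [hf] at hchain
          have hlt2 := (key_arith (1 / m2 G) _ _ _ _ hcpos (by exact_mod_cast h2)
            (by exact_mod_cast hvn)).mpr hchain
          rw [hf]
          calc (J0.edgeSet.ncard : ℝ) / ((J0.verts.ncard : ℝ) - 2 + 1 / m2 G) <
              (H.edgeSet.ncard : ℝ) / ((Fintype.card W : ℝ) - 2 + 1 / m2 G) := hlt2
            _ < mStar H := by rw [← hf]; exact hfHM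
        · have hveq : J0.verts.ncard = Fintype.card W := le_antisymm (hvle J0) (not_lt.mp hvn)
          have hele0 := hele J0
          have hle2 : d2a G J0.verts.ncard J0.edgeSet.ncard ≤
              d2a G (Fintype.card W) H.edgeSet.ncard := by
            rw [hf, hf, hveq, div_le_div_iff₀ hBpos hBpos]
            exact mul_le_mul_of_nonneg_right (by exact_mod_cast hele0) hBpos.le
          exact lt_of_le_of_lt hle2 hfHM
  exact ⟨hAiff.trans hBiff, (hAiff.trans hBiff).trans hCiff⟩

end AsymRamsey
end

section
/- Let a ≤ 1 and b < 2 be real numbers and let H be a graph with v_H ≥ 3. Then H is balanced with respect to d_{a,b} if and only if m*(H) ≥ d_{a,b}(H) (equivalently, if and only if m*(H) ≥ m_{a,b}(H)); similarly, H is strictly balanced with respect to d_{a,b} if and only if m*(H) > d_{a,b}(H) (equivalently, if and only if m*(H) > m_{a,b}(H)). -/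
open scoped Classical

namespace AsymRamsey

section AuxStmt8

variable {W : Type*} [Fintype W] {H : SimpleGraph W}

private lemma aux_alg {a b eJ eH vJ vH : ℝ} (hbJ : b < vJ) (hJH : vJ < vH) :
    ((eJ - a)/(vJ - b) ≤ (eH - a)/(vH - b) ↔ (eH - a)/(vH - b) ≤ (eH - eJ)/(vH - vJ)) := by
  have h1 : 0 < vJ - b := by linarith
  have h2 : 0 < vH - b := by linarith
  have h3 : 0 < vH - vJ := by linarith
  rw [div_le_div_iff₀ h1 h2, div_le_div_iff₀ h2 h3]
  constructor <;> intro h <;> nlinarith [h]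

private lemma aux_alg' {a b eJ eH vJ vH : ℝ} (hbJ : b < vJ) (hJH : vJ < vH) :
    ((eJ - a)/(vJ - b) < (eH - a)/(vH - b) ↔ (eH - a)/(vH - b) < (eH - eJ)/(vH - vJ)) := by
  have h1 : 0 < vJ - b := by linarith
  have h2 : 0 < vH - b := by linarith
  have h3 : 0 < vH - vJ := by linarith
  rw [div_lt_div_iff₀ h1 h2, div_lt_div_iff₀ h2 h3]
  constructor <;> intro h <;> nlinarith [h]

private lemma aux_finite_subgraph (H : SimpleGraph W) : Finite H.Subgraph := by
  apply Finite.of_injective (fun J : H.Subgraph => (J.verts, J.edgeSet))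
  intro J K h
  rw [Prod.mk.injEq] at h
  ext u v
  · rw [h.1]
  · constructor <;> intro hadj <;>
      [rw [← SimpleGraph.Subgraph.mem_edgeSet, ← h.2]; rw [← SimpleGraph.Subgraph.mem_edgeSet, h.2]] <;>
      exact hadj

private lemma aux_ecard_le (J : H.Subgraph) : J.edgeSet.ncard ≤ H.edgeSet.ncard :=
  Set.ncard_le_ncard (SimpleGraph.Subgraph.edgeSet_subset J) (Set.toFinite _)

private lemma aux_vcard_le (J : H.Subgraph) : J.verts.ncard ≤ Fintype.card W := by
  have := Set.ncard_le_ncard (Set.subset_univ J.verts) (Set.toFinite _)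
  rwa [Set.ncard_univ, Nat.card_eq_fintype_card] at this

private lemma aux_two_le_vcard (J : H.Subgraph) (he : J.edgeSet.ncard ≠ 0) :
    2 ≤ J.verts.ncard := by
  obtain ⟨e, he⟩ := Set.nonempty_of_ncard_ne_zero he
  induction e using Sym2.ind with
  | _ u v =>
    rw [SimpleGraph.Subgraph.mem_edgeSet] at he
    have hne : u ≠ v := (J.adj_sub he).ne
    have hsub : ({u, v} : Set W) ⊆ J.verts := by
      intro x hx
      rcases hx with h | h
      · subst h; exact J.edge_vert he
      · simp only [Set.mem_singleton_iff] at h; subst h; exact J.edge_vert he.symm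
    calc 2 = ({u, v} : Set W).ncard := (Set.ncard_pair hne).symm
    _ ≤ J.verts.ncard := Set.ncard_le_ncard hsub (Set.toFinite _)

/-- The subgraph with vertex set `{u, v}` and no edges. -/
private def auxPairSubgraph (H : SimpleGraph W) (u v : W) : H.Subgraph where
  verts := {u, v}
  Adj := fun _ _ => False
  adj_sub := False.elim
  edge_vert := False.elim
  symm := ⟨fun _ _ h => False.elim h⟩

private lemma auxPairSubgraph_edgeSet (H : SimpleGraph W) (u v : W) :
    (auxPairSubgraph H u v).edgeSet = ∅ := by
  ext e
  induction e using Sym2.ind with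
  | _ x y => simp [SimpleGraph.Subgraph.mem_edgeSet, auxPairSubgraph]

end AuxStmt8

/-- Lemma 5: for `a ≤ 1`, `b < 2` and a graph `H` with `v_H ≥ 3`: `H` is
balanced w.r.t. `d_{a,b}` iff `m*(H) ≥ d_{a,b}(H)` (equivalently iff `m*(H) ≥ m_{a,b}(H)`),
and strictly balanced w.r.t. `d_{a,b}` iff `m*(H) > d_{a,b}(H)` (equivalently iff
`m*(H) > m_{a,b}(H)`). -/
theorem stmt8 {W : Type*} [Fintype W] (a b : ℝ) (ha : a ≤ 1) (hb : b < 2)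
    (H : SimpleGraph W) (hW : 3 ≤ Fintype.card W) :
    (BalancedAB a b H ↔ dab a b (Fintype.card W) H.edgeSet.ncard ≤ mStar H) ∧
    (BalancedAB a b H ↔ mab a b H ≤ mStar H) ∧
    (StrictlyBalancedAB a b H ↔ dab a b (Fintype.card W) H.edgeSet.ncard < mStar H) ∧
    (StrictlyBalancedAB a b H ↔ mab a b H < mStar H) := by
  classical
  haveI : Finite H.Subgraph := aux_finite_subgraph H
  set vH := Fintype.card W with hvHdef
  set eH := H.edgeSet.ncard with heHdef
  set SS : Set ℝ :=
    {x : ℝ | ∃ J : H.Subgraph, x = dab a b J.verts.ncard J.edgeSet.ncard} with hSSdef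
  set SI : Set ℝ :=
    {x : ℝ | ∃ J : H.Subgraph, 2 ≤ J.verts.ncard ∧ J.verts.ncard < vH ∧
      x = ((eH : ℝ) - (J.edgeSet.ncard : ℝ)) /
        ((vH : ℝ) - (J.verts.ncard : ℝ))} with hSIdef
  have hmabSS : mab a b H = sSup SS := rfl
  have hmStarSI : mStar H = sInf SI := rfl
  have hvHR : (3:ℝ) ≤ (vH:ℝ) := by exact_mod_cast hW
  have hbvH : b < (vH:ℝ) := by linarith
  -- finiteness and bounds
  have hSSfin : SS.Finite := by
    apply (Set.finite_range (fun J : H.Subgraph =>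
      dab a b J.verts.ncard J.edgeSet.ncard)).subset
    rintro x ⟨J, rfl⟩; exact ⟨J, rfl⟩
  have hSIfin : SI.Finite := by
    apply (Set.finite_range (fun J : H.Subgraph =>
      ((eH : ℝ) - (J.edgeSet.ncard : ℝ)) / ((vH : ℝ) - (J.verts.ncard : ℝ)))).subset
    rintro x ⟨J, _, _, rfl⟩; exact ⟨J, rfl⟩
  have hbddSS : BddAbove SS := hSSfin.bddAbove
  have hbddSI : BddBelow SI := hSIfin.bddBelow
  have htopmem : dab a b vH eH ∈ SS := by
    refine ⟨⊤, ?_⟩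
    rw [SimpleGraph.Subgraph.verts_top, SimpleGraph.Subgraph.edgeSet_top, Set.ncard_univ,
      Nat.card_eq_fintype_card]
  have hdH_le_mab : dab a b vH eH ≤ mab a b H := by
    rw [hmabSS]; exact le_csSup hbddSS htopmem
  -- a two-vertex member of SI
  obtain ⟨u₀, v₀, huv₀⟩ : ∃ u v : W, u ≠ v :=
    Fintype.exists_pair_of_one_lt_card (by omega)
  have hx₀ : ((eH : ℝ) - 0) / ((vH : ℝ) - 2) ∈ SI := by
    refine ⟨auxPairSubgraph H u₀ v₀, ?_, ?_, ?_⟩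
    · show 2 ≤ ({u₀, v₀} : Set W).ncard
      rw [Set.ncard_pair huv₀]
    · show ({u₀, v₀} : Set W).ncard < vH
      rw [Set.ncard_pair huv₀]; omega
    · show _ = ((eH:ℝ) - ((auxPairSubgraph H u₀ v₀).edgeSet.ncard : ℝ)) /
          ((vH:ℝ) - (({u₀, v₀} : Set W).ncard : ℝ))
      rw [auxPairSubgraph_edgeSet, Set.ncard_empty, Set.ncard_pair huv₀]
      norm_num
  -- balancedness as an upper-bound property
  have hbal_iff : BalancedAB a b H ↔ ∀ x ∈ SS, x ≤ dab a b vH eH := by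
    constructor
    · intro hB x hx
      calc x ≤ sSup SS := le_csSup hbddSS hx
      _ = dab a b vH eH := hB
    · intro hub
      exact le_antisymm (csSup_le ⟨_, htopmem⟩ hub) hdH_le_mab
  -- key algebraic equivalences
  have key1 : ∀ J : H.Subgraph, J.edgeSet.ncard ≠ 0 → J.verts.ncard < vH →
      (dab a b J.verts.ncard J.edgeSet.ncard ≤ dab a b vH eH ↔
        dab a b vH eH ≤ ((eH:ℝ) - (J.edgeSet.ncard:ℝ)) / ((vH:ℝ) - (J.verts.ncard:ℝ))) := by
    intro J hJe hvlt
    have heHne : eH ≠ 0 := fun h => hJe (Nat.le_zero.mp (h ▸ aux_ecard_le J))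
    have h2 : (2:ℝ) ≤ (J.verts.ncard:ℝ) := by exact_mod_cast aux_two_le_vcard J hJe
    rw [dab, dab, if_neg hJe, if_neg heHne]
    exact aux_alg (by linarith) (by exact_mod_cast hvlt)
  have key1' : ∀ J : H.Subgraph, J.edgeSet.ncard ≠ 0 → J.verts.ncard < vH →
      (dab a b J.verts.ncard J.edgeSet.ncard < dab a b vH eH ↔
        dab a b vH eH < ((eH:ℝ) - (J.edgeSet.ncard:ℝ)) / ((vH:ℝ) - (J.verts.ncard:ℝ))) := by
    intro J hJe hvlt
    have heHne : eH ≠ 0 := fun h => hJe (Nat.le_zero.mp (h ▸ aux_ecard_le J))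
    have h2 : (2:ℝ) ≤ (J.verts.ncard:ℝ) := by exact_mod_cast aux_two_le_vcard J hJe
    rw [dab, dab, if_neg hJe, if_neg heHne]
    exact aux_alg' (by linarith) (by exact_mod_cast hvlt)
  -- the single-edge trick
  have hedgetrick : (∀ x ∈ SS, x ≤ dab a b vH eH) → eH ≠ 0 → ∀ k : ℕ, 2 ≤ k → k < vH →
      dab a b vH eH < (eH:ℝ) / ((vH:ℝ) - (k:ℝ)) := by
    intro hub heHne k hk2 hkv
    obtain ⟨e, he⟩ := Set.nonempty_of_ncard_ne_zero heHne
    induction e using Sym2.ind with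
    | _ u v =>
      rw [SimpleGraph.mem_edgeSet] at he
      have hKmem : dab a b 2 1 ∈ SS := by
        refine ⟨H.subgraphOfAdj he, ?_⟩
        rw [SimpleGraph.edgeSet_subgraphOfAdj, SimpleGraph.subgraphOfAdj_verts,
          Set.ncard_singleton, Set.ncard_pair he.ne]
      have hK := hub _ hKmem
      rw [dab, dab, if_neg one_ne_zero, if_neg heHne] at hK
      rw [dab, if_neg heHne]
      rw [div_le_div_iff₀ (by norm_num; linarith) (by linarith)] at hK
      have hkR2 : (2:ℝ) ≤ (k:ℝ) := by exact_mod_cast hk2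
      have hkRv : (k:ℝ) < (vH:ℝ) := by exact_mod_cast hkv
      have heH1 : (1:ℝ) ≤ (eH:ℝ) := by exact_mod_cast Nat.one_le_iff_ne_zero.mpr heHne
      rw [div_lt_div_iff₀ (by linarith) (by linarith)]
      push_cast at hK ⊢
      nlinarith [mul_nonneg (by linarith : (0:ℝ) ≤ (eH:ℝ) - a) (by linarith : (0:ℝ) ≤ (k:ℝ) - 2)]
  have hdHnonneg : 0 ≤ dab a b vH eH := by
    rw [dab]
    split
    · exact le_refl 0
    · next heHne =>
      have heH1 : (1:ℝ) ≤ (eH:ℝ) := by exact_mod_cast Nat.one_le_iff_ne_zero.mpr heHne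
      exact div_nonneg (by linarith) (by linarith)
  -- Iff 1
  have iff1 : BalancedAB a b H ↔ dab a b vH eH ≤ mStar H := by
    rw [hmStarSI, hbal_iff]
    constructor
    · intro hub
      apply le_csInf ⟨_, hx₀⟩
      rintro x ⟨J, h2, hlt, rfl⟩
      by_cases hJe : J.edgeSet.ncard = 0
      · rw [hJe]
        by_cases heHe : eH = 0
        · rw [dab, if_pos heHe, heHe]
          norm_num
        · have := hedgetrick hub heHe J.verts.ncard h2 hlt
          simpa using this.le
      · exact (key1 J hJe hlt).1 (hub _ ⟨J, rfl⟩)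
    · intro hle
      rintro x ⟨J, rfl⟩
      by_cases hJe : J.edgeSet.ncard = 0
      · rw [dab, if_pos hJe]
        exact hdHnonneg
      · rcases (aux_vcard_le J).lt_or_eq with hvlt | hveq
        · refine (key1 J hJe hvlt).2 (le_trans hle (csInf_le hbddSI ⟨J, ?_, hvlt, rfl⟩))
          exact aux_two_le_vcard J hJe
        · have heHne : eH ≠ 0 := fun h => hJe (Nat.le_zero.mp (h ▸ aux_ecard_le J))
          have hcard : (J.edgeSet.ncard : ℝ) ≤ (eH:ℝ) := by exact_mod_cast aux_ecard_le J
          rw [dab, dab, if_neg hJe, if_neg heHne, hveq]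
          gcongr
  -- Iff 2
  have iff2 : BalancedAB a b H ↔ mab a b H ≤ mStar H := by
    constructor
    · intro hB
      have := iff1.1 hB
      calc mab a b H = dab a b vH eH := hB
      _ ≤ mStar H := this
    · intro hle
      exact iff1.2 (le_trans hdH_le_mab hle)
  -- Iff 3
  have iff3 : StrictlyBalancedAB a b H ↔ dab a b vH eH < mStar H := by
    constructor
    · rintro ⟨hB, hstrict⟩
      have hub := hbal_iff.1 hB
      have heHne : eH ≠ 0 := by
        intro h0
        have hbot : (⊥ : H.Subgraph) ≠ ⊤ := by
          intro h
          have := congrArg SimpleGraph.Subgraph.verts h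
          rw [SimpleGraph.Subgraph.verts_bot, SimpleGraph.Subgraph.verts_top] at this
          have : (u₀ : W) ∈ (∅ : Set W) := this ▸ Set.mem_univ u₀
          exact this
        have hlt := hstrict ⊥ hbot
        rw [hB] at hlt
        rw [show ((⊥ : H.Subgraph).edgeSet.ncard) = 0 by
            rw [SimpleGraph.Subgraph.edgeSet_bot, Set.ncard_empty]] at hlt
        rw [dab, if_pos rfl, dab, if_pos h0] at hlt
        exact lt_irrefl 0 hlt
      have hmem := (Set.Nonempty.csInf_mem ⟨_, hx₀⟩ hSIfin)
      obtain ⟨J, h2, hlt, hxeq⟩ := hmem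
      rw [hmStarSI, hxeq]
      by_cases hJe : J.edgeSet.ncard = 0
      · have := hedgetrick hub heHne J.verts.ncard h2 hlt
        rw [hJe]
        simpa using this
      · have hJne : J ≠ ⊤ := by
          intro h
          rw [h, SimpleGraph.Subgraph.verts_top, Set.ncard_univ, Nat.card_eq_fintype_card] at hlt
          exact lt_irrefl _ hlt
        have := hstrict J hJne
        rw [hB] at this
        exact (key1' J hJe hlt).1 this
    · intro hlt
      have hB := iff1.2 hlt.le
      refine ⟨hB, ?_⟩
      have heHne : eH ≠ 0 := by
        intro h0
        have h1 : mStar H ≤ ((eH : ℝ) - 0) / ((vH : ℝ) - 2) := by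
          rw [hmStarSI]; exact csInf_le hbddSI hx₀
        rw [h0] at h1
        rw [dab, if_pos h0] at hlt
        norm_num at h1
        linarith
      have heH1 : (1:ℝ) ≤ (eH:ℝ) := by exact_mod_cast Nat.one_le_iff_ne_zero.mpr heHne
      have hdHpos : 0 < dab a b vH eH := by
        rcases hdHnonneg.lt_or_eq with h | h
        · exact h
        · exfalso
          rw [dab, if_neg heHne] at h
          rcases (div_eq_zero_iff.mp h.symm) with h' | h'
          · -- eH = a, so eH = 1 and a = 1
            obtain ⟨e, he⟩ := Set.nonempty_of_ncard_ne_zero heHne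
            induction e using Sym2.ind with
            | _ u v =>
              rw [SimpleGraph.mem_edgeSet] at he
              have hKm : ((eH:ℝ) - ((H.subgraphOfAdj he).edgeSet.ncard : ℝ)) /
                  ((vH:ℝ) - ((H.subgraphOfAdj he).verts.ncard : ℝ)) ∈ SI := by
                refine ⟨H.subgraphOfAdj he, ?_, ?_, rfl⟩
                · show 2 ≤ ({u, v} : Set W).ncard
                  rw [Set.ncard_pair he.ne]
                · show ({u, v} : Set W).ncard < vH
                  rw [Set.ncard_pair he.ne]; omega
              have h1 : mStar H ≤ ((eH:ℝ) - ((H.subgraphOfAdj he).edgeSet.ncard : ℝ)) /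
                  ((vH:ℝ) - ((H.subgraphOfAdj he).verts.ncard : ℝ)) := by
                rw [hmStarSI]; exact csInf_le hbddSI hKm
              rw [show ((H.subgraphOfAdj he).edgeSet.ncard) = 1 by
                    rw [SimpleGraph.edgeSet_subgraphOfAdj, Set.ncard_singleton],
                  show ((H.subgraphOfAdj he).verts.ncard) = 2 by
                    rw [SimpleGraph.subgraphOfAdj_verts, Set.ncard_pair he.ne]] at h1
              have heHeq : (eH:ℝ) = 1 := le_antisymm (by linarith) heH1
              have ha1 : a = 1 := by linarith
              rw [dab, if_neg heHne] at hlt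
              rw [heHeq, ha1] at hlt
              rw [heHeq] at h1
              norm_num at h1 hlt
              linarith
          · linarith
      intro J hJtop
      rw [hB]
      by_cases hJe : J.edgeSet.ncard = 0
      · rw [dab, if_pos hJe]
        exact hdHpos
      · rcases (aux_vcard_le J).lt_or_eq with hvlt | hveq
        · refine (key1' J hJe hvlt).2 (lt_of_lt_of_le hlt ?_)
          rw [hmStarSI]
          exact csInf_le hbddSI ⟨J, aux_two_le_vcard J hJe, hvlt, rfl⟩
        · have hverts : J.verts = Set.univ := by
            apply Set.eq_of_subset_of_ncard_le (Set.subset_univ _) _ Set.finite_univ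
            rw [Set.ncard_univ, Nat.card_eq_fintype_card, hveq]
          have hedne : J.edgeSet ≠ H.edgeSet := by
            intro h
            apply hJtop
            ext x y
            · simp [hverts, SimpleGraph.Subgraph.verts_top]
            · rw [SimpleGraph.Subgraph.top_adj, ← SimpleGraph.mem_edgeSet, ← h,
                SimpleGraph.Subgraph.mem_edgeSet]
          have hsub : J.edgeSet ⊂ H.edgeSet :=
            ssubset_of_subset_of_ne (SimpleGraph.Subgraph.edgeSet_subset J) hedne
          have hcard : J.edgeSet.ncard < eH := Set.ncard_lt_ncard hsub (Set.toFinite _)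
          have hcardR : (J.edgeSet.ncard : ℝ) < (eH:ℝ) := by exact_mod_cast hcard
          rw [dab, dab, if_neg hJe, if_neg heHne, hveq]
          gcongr
  -- Iff 4
  have iff4 : StrictlyBalancedAB a b H ↔ mab a b H < mStar H := by
    constructor
    · intro hS
      have := iff3.1 hS
      calc mab a b H = dab a b vH eH := hS.1
      _ < mStar H := this
    · intro hlt
      exact iff3.2 (lt_of_le_of_lt hdH_le_mab hlt)
  exact ⟨iff1, iff2, iff3, iff4⟩
end AsymRamsey
end
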